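/- The volume of a hyperspherical cap of a k-dimensional ball of radius r cut at colatitude angle φ (i.e., the cap whose base has radius a = r·sin φ, with φ ≤ π/2) equals (1/2)·V_k(r)·I_{sin²φ}((k+1)/2, 1/2), where V_k(r) is the volume of the k-dimensional ball of radius r and I_x(a,b) is the regularized incomplete beta function. -/

import Mathlib

open Metric MeasureTheory Real

/-- The regularized incomplete beta function `I_x(a, b)`. -/
noncomputable def regIncBeta (x a b : ℝ) : ℝ :=
  (∫ t in (0:ℝ)..x, t ^ (a - 1) * (1 - t) ^ (b - 1)) /
    (∫ t in (0:ℝ)..1, t ^ (a - 1) * (1 - t) ^ (b - 1))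


open Set

lemma betaIntegrand_intervalIntegrable {a b : ℝ} (ha : 0 < a) (hb : 0 < b) :
    IntervalIntegrable (fun t : ℝ => t ^ (a - 1) * (1 - t) ^ (b - 1)) volume 0 1 := by
  have hc : IntervalIntegrable
      (fun x : ℝ => (x : ℂ) ^ ((a : ℂ) - 1) * (1 - (x : ℂ)) ^ ((b : ℂ) - 1)) volume 0 1 :=
    Complex.betaIntegral_convergent (by simpa) (by simpa)
  have hn := hc.norm
  rw [intervalIntegrable_iff_integrableOn_Ioo_of_le (by norm_num)] at hn ⊢
  refine hn.congr_fun (fun t ht => ?_) measurableSet_Ioo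
  have ht1 : (0:ℝ) < 1 - t := by linarith [ht.2]
  beta_reduce
  rw [norm_mul, Complex.norm_cpow_eq_rpow_re_of_pos ht.1]
  have : (1 - (t:ℂ)) = ((1 - t : ℝ) : ℂ) := by push_cast; ring
  rw [this, Complex.norm_cpow_eq_rpow_re_of_pos ht1]
  norm_num

lemma betaIntegral_real {a b : ℝ} (ha : 0 < a) (hb : 0 < b) :
    ∫ t in (0:ℝ)..1, t ^ (a - 1) * (1 - t) ^ (b - 1) = Gamma a * Gamma b / Gamma (a + b) := by
  have key : Complex.betaIntegral a b
      = ((∫ t in (0:ℝ)..1, t ^ (a - 1) * (1 - t) ^ (b - 1) : ℝ) : ℂ) := by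
    rw [Complex.betaIntegral, ← intervalIntegral.integral_ofReal]
    apply intervalIntegral.integral_congr_ae
    have h1 : ∀ᵐ x : ℝ, x ≠ 1 := by
      rw [ae_iff]
      have : {x : ℝ | ¬ x ≠ 1} = {1} := by ext x; simp
      rw [this]; exact volume_singleton
    filter_upwards [h1] with x hx hmem
    rw [uIoc_of_le (by norm_num : (0:ℝ) ≤ 1)] at hmem
    have hx0 : 0 < x := hmem.1
    have hx1 : x < 1 := lt_of_le_of_ne hmem.2 hx
    rw [Complex.ofReal_mul, Complex.ofReal_cpow hx0.le, Complex.ofReal_cpow (by linarith),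
      Complex.ofReal_sub, Complex.ofReal_sub]
    push_cast
    ring
  have h := Complex.Gamma_mul_Gamma_eq_betaIntegral
    (s := (a:ℂ)) (t := (b:ℂ)) (by simpa) (by simpa)
  rw [key, ← Complex.ofReal_add, Complex.Gamma_ofReal, Complex.Gamma_ofReal,
    Complex.Gamma_ofReal, ← Complex.ofReal_mul, ← Complex.ofReal_mul] at h
  have h' := Complex.ofReal_inj.mp h
  have hG : Gamma (a + b) ≠ 0 := (Gamma_pos_of_pos (by linarith)).ne'
  field_simp
  linarith [h']

lemma sum_sq_lt_empty {n : ℕ} {t : ℝ} (ht : t ≤ 0) :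
    {y : Fin n → ℝ | ∑ j, y j ^ 2 < t} = ∅ := by
  ext y
  simp only [mem_setOf_eq, mem_empty_iff_false, iff_false, not_lt]
  exact le_trans ht (Finset.sum_nonneg fun j _ => sq_nonneg _)

lemma slice_vol (n : ℕ) {t : ℝ} (ht : 0 < t) :
    volume {y : Fin n → ℝ | ∑ j, y j ^ 2 < t}
      = ENNReal.ofReal (Real.sqrt t ^ n * (Real.sqrt π ^ n / Real.Gamma (n / 2 + 1))) := by
  rcases Nat.eq_zero_or_pos n with hn | hn
  · subst hn
    have hset : {y : Fin 0 → ℝ | ∑ j, y j ^ 2 < t} = univ := by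
      ext y; simp [ht]
    rw [hset]
    rw [MeasureTheory.volume_pi, MeasureTheory.Measure.pi_univ]
    simp [Real.Gamma_one]
  · have : Nonempty (Fin n) := Fin.pos_iff_nonempty.mp hn
    have hset : (MeasurableEquiv.toLp 2 (Fin n → ℝ)).symm.symm ⁻¹'
        (ball (0 : EuclideanSpace ℝ (Fin n)) (Real.sqrt t))
        = {y : Fin n → ℝ | ∑ j, y j ^ 2 < t} := by
      ext y
      simp only [mem_preimage, mem_ball, dist_zero_right, mem_setOf_eq]
      rw [EuclideanSpace.norm_eq]
      have hco : ∀ i, ((MeasurableEquiv.toLp 2 (Fin n → ℝ)).symm.symm y) i = y i := fun i => rfl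
      simp_rw [hco, Real.norm_eq_abs, sq_abs]
      rw [show Real.sqrt t = Real.sqrt t from rfl]
      constructor
      · intro h
        have := (Real.sqrt_lt_sqrt_iff (Finset.sum_nonneg fun j _ => sq_nonneg _)).mp h
        simpa using this
      · intro h
        exact (Real.sqrt_lt_sqrt_iff (Finset.sum_nonneg fun j _ => sq_nonneg _)).mpr h
    rw [← hset,
      ((EuclideanSpace.volume_preserving_symm_measurableEquiv_toLp (Fin n)).symm _).measure_preimage
        measurableSet_ball.nullMeasurableSet,
      EuclideanSpace.volume_ball, Fintype.card_fin,
      ← ENNReal.ofReal_pow (Real.sqrt_nonneg t), ← ENNReal.ofReal_mul (by positivity)]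

lemma cap_vol (n : ℕ) {c r : ℝ} (hr : 0 < r) (hc0 : 0 ≤ c) (hcr : c ≤ r) :
    volume {y : EuclideanSpace ℝ (Fin (n+1)) |
        y ∈ ball (0 : EuclideanSpace ℝ (Fin (n+1))) r ∧ c ≤ y 0}
      = ENNReal.ofReal ((∫ x in c..r, Real.sqrt (r^2 - x^2) ^ n)
          * (Real.sqrt π ^ n / Real.Gamma (n/2+1))) := by
  set C : ℝ := Real.sqrt π ^ n / Real.Gamma (n/2+1) with hC
  have hCpos : 0 < C := by
    apply div_pos (by positivity)
    exact Real.Gamma_pos_of_pos (by positivity)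
  -- Step 1: move to the product space
  set cap := {y : EuclideanSpace ℝ (Fin (n+1)) |
      y ∈ ball (0 : EuclideanSpace ℝ (Fin (n+1))) r ∧ c ≤ y 0} with hcap
  have hcapm : MeasurableSet cap :=
    measurableSet_ball.inter (measurableSet_le measurable_const
      ((measurable_pi_apply 0).comp (MeasurableEquiv.toLp 2 (Fin (n+1) → ℝ)).symm.measurable))
  set A := {x : Fin (n+1) → ℝ | (∑ i, x i ^ 2 < r ^ 2) ∧ c ≤ x 0} with hA
  have hAm : MeasurableSet A :=
    (measurableSet_lt (Finset.measurable_sum _ (fun i _ => (measurable_pi_apply i).pow_const 2))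
      measurable_const).inter (measurableSet_le measurable_const (measurable_pi_apply 0))
  have h1 : (MeasurableEquiv.toLp 2 (Fin (n+1) → ℝ)).symm.symm ⁻¹' cap = A := by
    ext x
    simp only [hcap, mem_preimage, mem_setOf_eq, mem_ball, dist_zero_right, hA]
    have hco : ∀ i, ((MeasurableEquiv.toLp 2 (Fin (n+1) → ℝ)).symm.symm x) i = x i :=
      fun i => rfl
    rw [EuclideanSpace.norm_eq]
    simp_rw [hco, Real.norm_eq_abs, sq_abs]
    rw [Real.sqrt_lt' hr]
  have h2 : volume cap = volume A := by
    rw [← h1]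
    exact (((EuclideanSpace.volume_preserving_symm_measurableEquiv_toLp (Fin (n+1))).symm _).measure_preimage
      hcapm.nullMeasurableSet).symm
  -- Step 2: split off the first coordinate
  set T := {p : ℝ × (Fin n → ℝ) | (p.1 ^ 2 + ∑ j, p.2 j ^ 2 < r ^ 2) ∧ c ≤ p.1} with hT
  have hTm : MeasurableSet T := by
    have hm : Measurable (fun p : ℝ × (Fin n → ℝ) => p.1 ^ 2 + ∑ j, p.2 j ^ 2) := by
      apply (measurable_fst.pow_const 2).add
      exact Finset.measurable_sum _ (fun i _ => ((measurable_pi_apply i).comp measurable_snd).pow_const 2)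
    exact (measurableSet_lt hm measurable_const).inter
      (measurableSet_le measurable_const measurable_fst)
  have h3 : (MeasurableEquiv.piFinSuccAbove (fun _ : Fin (n+1) => ℝ) 0).symm ⁻¹' A = T := by
    ext p
    have happ : (MeasurableEquiv.piFinSuccAbove (fun _ : Fin (n+1) => ℝ) 0).symm p
        = (0 : Fin (n+1)).insertNth p.1 p.2 := by
      simp [MeasurableEquiv.piFinSuccAbove_symm_apply, Fin.consEquiv]
    simp only [mem_preimage, hA, mem_setOf_eq, happ, hT, Fin.insertNth_zero,
      Fin.sum_univ_succ, Fin.cons_zero, Fin.cons_succ, cast_eq]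
  have h4 : volume A = (volume.prod volume) T := by
    rw [← h3]
    exact (((volume_preserving_piFinSuccAbove (fun _ : Fin (n+1) => ℝ) 0).symm _).measure_preimage
      hAm.nullMeasurableSet).symm
  -- Step 3: Fubini
  have h5 : (volume.prod volume) T
      = ∫⁻ x : ℝ, volume {y : Fin n → ℝ | (x ^ 2 + ∑ j, y j ^ 2 < r ^ 2) ∧ c ≤ x} := by
    rw [Measure.prod_apply hTm]
    rfl
  -- Step 4: identify the integrand with an indicator
  have h6 : ∀ x : ℝ, volume {y : Fin n → ℝ | (x ^ 2 + ∑ j, y j ^ 2 < r ^ 2) ∧ c ≤ x}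
      = Set.indicator (Ico c r)
          (fun x => ENNReal.ofReal (Real.sqrt (r^2 - x^2) ^ n * C)) x := by
    intro x
    by_cases hx : x ∈ Ico c r
    · rw [Set.indicator_of_mem hx]
      have ht : 0 < r ^ 2 - x ^ 2 := by nlinarith [hx.1, hx.2]
      have : {y : Fin n → ℝ | (x ^ 2 + ∑ j, y j ^ 2 < r ^ 2) ∧ c ≤ x}
          = {y : Fin n → ℝ | ∑ j, y j ^ 2 < r ^ 2 - x ^ 2} := by
        ext y
        simp only [mem_setOf_eq]
        constructor
        · intro h; linarith [h.1]
        · intro h; exact ⟨by linarith, hx.1⟩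
      rw [this, slice_vol n ht]
    · rw [Set.indicator_of_notMem hx]
      rcases not_and_or.mp ((mem_Ico).not.mp hx) with h | h
      · push_neg at h
        have : {y : Fin n → ℝ | (x ^ 2 + ∑ j, y j ^ 2 < r ^ 2) ∧ c ≤ x} = ∅ := by
          ext y; simp only [mem_setOf_eq, mem_empty_iff_false, iff_false, not_and]
          intro _; linarith
        rw [this, measure_empty]
      · push_neg at h
        have : {y : Fin n → ℝ | (x ^ 2 + ∑ j, y j ^ 2 < r ^ 2) ∧ c ≤ x} = ∅ := by
          ext y; simp only [mem_setOf_eq, mem_empty_iff_false, iff_false, not_and]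
          intro hlt _
          have : (0:ℝ) ≤ ∑ j, y j ^ 2 := Finset.sum_nonneg fun j _ => sq_nonneg _
          nlinarith [hc0]
        rw [this, measure_empty]
  -- Step 5: compute the lintegral
  have hfc : Continuous (fun x : ℝ => Real.sqrt (r^2 - x^2) ^ n * C) :=
    (((continuous_const.sub (continuous_pow 2)).sqrt).pow n).mul continuous_const
  have h7 : ∫⁻ x : ℝ, Set.indicator (Ico c r)
        (fun x => ENNReal.ofReal (Real.sqrt (r^2 - x^2) ^ n * C)) x
      = ENNReal.ofReal (∫ x in Ico c r, Real.sqrt (r^2 - x^2) ^ n * C) := by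
    rw [lintegral_indicator measurableSet_Ico]
    rw [← ofReal_integral_eq_lintegral_ofReal]
    · exact (hfc.integrableOn_Icc).mono_set Ico_subset_Icc_self
    · exact ae_of_all _ (fun x => by positivity)
  rw [h2, h4, h5]
  simp_rw [h6]
  rw [h7]
  congr 1
  rw [MeasureTheory.integral_Ico_eq_integral_Ioo, ← MeasureTheory.integral_Ioc_eq_integral_Ioo,
    ← intervalIntegral.integral_of_le hcr, intervalIntegral.integral_mul_const]

lemma beta_subst {a u : ℝ} (ha : 1 ≤ a) (hu0 : 0 ≤ u) (hu1 : u ≤ 1)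
    (hbeta : IntervalIntegrable (fun t : ℝ => t ^ (a - 1) * (1 - t) ^ ((1:ℝ)/2 - 1)) volume 0 1) :
    ∫ t in (0:ℝ)..(1 - u ^ 2), t ^ (a - 1) * (1 - t) ^ ((1:ℝ)/2 - 1)
      = 2 * ∫ x in u..1, (1 - x ^ 2) ^ (a - 1) := by
  set g : ℝ → ℝ := fun t => t ^ (a - 1) * (1 - t) ^ ((1:ℝ)/2 - 1) with hg
  set f : ℝ → ℝ := fun x => 1 - x ^ 2 with hf
  have hmin : u ⊓ 1 = u := inf_eq_left.mpr hu1
  have hmax : u ⊔ 1 = 1 := sup_eq_right.mpr hu1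
  have huIcc : uIcc u 1 = Icc u 1 := uIcc_of_le hu1
  have hcont2 : Continuous (fun x : ℝ => (1 - x ^ 2) ^ (a - 1)) := by
    rw [continuous_iff_continuousAt]
    intro x
    exact (continuousAt_const.sub (continuousAt_id.pow 2)).rpow_const (Or.inr (by linarith))
  have hpt : ∀ x : ℝ, 0 < x → (g ∘ f) x * (-2 * x) = -2 * (1 - x ^ 2) ^ (a - 1) := by
    intro x hxpos
    simp only [Function.comp, hg, hf]
    rw [show (1:ℝ) - (1 - x ^ 2) = x ^ 2 by ring,
      show (1:ℝ)/2 - 1 = -(1/2) by norm_num,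
      Real.rpow_neg (sq_nonneg x)]
    have hxx : (x ^ 2 : ℝ) ^ ((1:ℝ)/2) = x := by
      rw [← Real.sqrt_eq_rpow, Real.sqrt_sq hxpos.le]
    rw [hxx]
    field_simp
  have hae : (fun x => (g ∘ f) x * (-2 * x))
      =ᵐ[volume.restrict (uIcc u 1)] (fun x => -2 * (1 - x ^ 2) ^ (a - 1)) := by
    have h0 : ∀ᵐ x : ℝ, x ≠ 0 := by
      rw [ae_iff]
      have : {x : ℝ | ¬ x ≠ 0} = {0} := by ext x; simp
      rw [this]; exact volume_singleton
    have hs : ∀ᵐ x ∂(volume.restrict (uIcc u 1)), x ∈ uIcc u 1 :=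
      ae_restrict_mem measurableSet_uIcc
    filter_upwards [ae_restrict_of_ae h0, hs] with x hx0 hxs
    rw [huIcc] at hxs
    exact hpt x (lt_of_le_of_ne (le_trans hu0 hxs.1) (Ne.symm hx0))
  have key : ∫ x in u..1, (g ∘ f) x * (-2 * x) = ∫ t in f u..f 1, g t := by
    apply intervalIntegral.integral_comp_mul_deriv'''
    · exact (continuous_const.sub (continuous_pow 2)).continuousOn
    · intro x hx
      have : HasDerivAt f (-2 * x) x := by
        simpa using ((hasDerivAt_pow 2 x).const_sub 1)
      exact this.hasDerivWithinAt
    · rw [hmin, hmax]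
      have himg : f '' Ioo u 1 ⊆ Ioo 0 1 := by
        rintro t ⟨x, hx, rfl⟩
        constructor
        · simp only [hf]; nlinarith [hx.1, hx.2, hu0]
        · simp only [hf]; nlinarith [hx.1, hx.2, hu0]
      refine ContinuousOn.mono ?_ himg
      intro t ht
      apply ContinuousAt.continuousWithinAt
      refine (Real.continuousAt_rpow_const t _ (Or.inl ht.1.ne')).mul
        ((continuousAt_const.sub continuousAt_id).rpow_const (Or.inl ?_))
      simp only [Pi.sub_apply, id_eq]
      exact ne_of_gt (by linarith [ht.2])
    · have himg : f '' uIcc u 1 ⊆ Icc 0 1 := by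
        rintro t ⟨x, hx, rfl⟩
        rw [huIcc] at hx
        constructor
        · simp only [hf]; nlinarith [hx.1, hx.2, hu0]
        · simp only [hf]; nlinarith [hx.1, hx.2, hu0]
      refine IntegrableOn.mono_set ?_ himg
      rw [integrableOn_Icc_iff_integrableOn_Ioc]
      exact hbeta.1
    · exact Integrable.congr ((continuous_const.mul hcont2).integrableOn_Icc.mono_set
        (by rw [huIcc])) hae.symm
  have heq1 : ∫ x in u..1, (g ∘ f) x * (-2 * x)
      = -2 * ∫ x in u..1, (1 - x ^ 2) ^ (a - 1) := by
    rw [← intervalIntegral.integral_const_mul]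
    apply intervalIntegral.integral_congr_ae
    filter_upwards with x hmem
    rw [uIoc_of_le hu1] at hmem
    exact hpt x (lt_of_le_of_lt hu0 hmem.1)
  have hfu : f u = 1 - u ^ 2 := rfl
  have hf1 : f 1 = 0 := by simp [hf]
  rw [hfu, hf1, intervalIntegral.integral_symm 0 (1 - u ^ 2), heq1] at key
  linarith [key]

/-- The volume of the hyperspherical cap of the `k`-dimensional
ball of radius `r` cut at colatitude angle `φ ≤ π/2` equals
`(1/2) ⬝ V_k(r) ⬝ I_{sin²φ}((k+1)/2, 1/2)`. -/
theorem stmt_7 (k : ℕ) (hk : 0 < k) (r φ : ℝ) (hr : 0 < r)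
    (hφ0 : 0 ≤ φ) (hφ : φ ≤ π / 2) :
    (volume {y : EuclideanSpace ℝ (Fin k) |
        y ∈ ball (0 : EuclideanSpace ℝ (Fin k)) r ∧
        r * Real.cos φ ≤ y ⟨0, hk⟩}).toReal =
      1 / 2 * (volume (ball (0 : EuclideanSpace ℝ (Fin k)) r)).toReal *
        regIncBeta (Real.sin φ ^ 2) ((k + 1) / 2) (1 / 2) := by
  obtain ⟨n, rfl⟩ : ∃ n, k = n + 1 := ⟨k - 1, (Nat.succ_pred_eq_of_pos hk).symm⟩
  have hπ := Real.pi_pos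
  have hcos0 : 0 ≤ Real.cos φ :=
    Real.cos_nonneg_of_mem_Icc ⟨by linarith, hφ⟩
  have hcos1 : Real.cos φ ≤ 1 := Real.cos_le_one φ
  have hc0 : 0 ≤ r * Real.cos φ := mul_nonneg hr.le hcos0
  have hcr : r * Real.cos φ ≤ r := by nlinarith
  have hG1 : 0 < Real.Gamma ((n:ℝ)/2 + 1) := Real.Gamma_pos_of_pos (by positivity)
  have hG2 : 0 < Real.Gamma ((n:ℝ)/2 + 1 + 1/2) := Real.Gamma_pos_of_pos (by positivity)
  have hsqπ : 0 < Real.sqrt π := Real.sqrt_pos.mpr hπ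
  -- the set with ⟨0, hk⟩ is the set with 0
  have hzero : (⟨0, hk⟩ : Fin (n+1)) = 0 := rfl
  rw [hzero]
  -- LHS via cap_vol
  have hS_nonneg : 0 ≤ (∫ x in (r * Real.cos φ)..r, Real.sqrt (r^2 - x^2) ^ n) :=
    intervalIntegral.integral_nonneg hcr (fun x _ => by positivity)
  rw [cap_vol n hr hc0 hcr, ENNReal.toReal_ofReal (by positivity)]
  -- normalize the integral by the substitution x = u * r
  have hsub := intervalIntegral.integral_comp_mul_right
    (fun x => Real.sqrt (r^2 - x^2) ^ n) (c := r) hr.ne' (a := Real.cos φ) (b := 1)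
  rw [one_mul, smul_eq_mul] at hsub
  have hcongr : ∫ u in (Real.cos φ)..1, Real.sqrt (r^2 - (u*r)^2) ^ n
      = ∫ u in (Real.cos φ)..1, r ^ n * (1 - u^2) ^ ((n:ℝ)/2) := by
    apply intervalIntegral.integral_congr
    intro u hu
    show Real.sqrt (r^2 - (u*r)^2) ^ n = r ^ n * (1 - u^2) ^ ((n:ℝ)/2)
    rw [uIcc_of_le hcos1] at hu
    have hu0 : 0 ≤ u := le_trans hcos0 hu.1
    have h1u : 0 ≤ 1 - u^2 := by nlinarith [hu.2]
    have : r^2 - (u*r)^2 = r^2 * (1 - u^2) := by ring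
    rw [this, Real.sqrt_mul (sq_nonneg r), Real.sqrt_sq hr.le, mul_pow]
    congr 1
    rw [Real.sqrt_eq_rpow, ← Real.rpow_natCast ((1-u^2) ^ ((1:ℝ)/2)) n,
      ← Real.rpow_mul h1u]
    congr 1
    ring
  have hIeq : (∫ x in (r * Real.cos φ)..r, Real.sqrt (r^2 - x^2) ^ n)
      = r ^ (n+1) * ∫ u in (Real.cos φ)..1, (1 - u^2) ^ ((n:ℝ)/2) := by
    have : (∫ x in (Real.cos φ * r)..r, Real.sqrt (r^2 - x^2) ^ n)
        = r * ∫ u in (Real.cos φ)..1, Real.sqrt (r^2 - (u*r)^2) ^ n := by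
      rw [hsub]; field_simp
    rw [show r * Real.cos φ = Real.cos φ * r from mul_comm _ _, this, hcongr,
      intervalIntegral.integral_const_mul, pow_succ]
    ring
  rw [hIeq]
  simp only [regIncBeta]
  rw [Real.sin_sq]
  have hn0 : (0:ℝ) ≤ (n:ℝ) := Nat.cast_nonneg n
  have hA1 : (1:ℝ) ≤ (n:ℝ)/2 + 1 := by linarith
  have hbeta := betaIntegrand_intervalIntegrable (a := (n:ℝ)/2+1) (b := (1:ℝ)/2)
    (by linarith) (by norm_num)
  have hnum := beta_subst hA1 hcos0 hcos1 hbeta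
  have hden := betaIntegral_real (a := (n:ℝ)/2+1) (b := (1:ℝ)/2) (by linarith) (by norm_num)
  have hexp : ((↑(n+1):ℝ)+1)/2 - 1 = (n:ℝ)/2 + 1 - 1 := by push_cast; ring
  rw [hexp, hnum, hden]
  have hred : (n:ℝ)/2 + 1 - 1 = (n:ℝ)/2 := by ring
  rw [hred]
  rw [EuclideanSpace.volume_ball, Fintype.card_fin, ENNReal.toReal_mul, ENNReal.toReal_pow,
    ENNReal.toReal_ofReal hr.le, ENNReal.toReal_ofReal
      (le_of_lt (div_pos (by positivity) (Real.Gamma_pos_of_pos (by positivity))))]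
  rw [show ((↑(n+1):ℝ))/2 + 1 = (n:ℝ)/2 + 1 + 1/2 by push_cast; ring]
  rw [Real.Gamma_one_half_eq]
  rw [pow_succ (Real.sqrt π) n]
  field_simp
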